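/- Let q : Γ → ℂˣ be a nondegenerate quadratic form on a finite abelian group Γ with associated nondegenerate bimultiplicative form B_q. Then |Σ_{a∈Γ} q(a)|² = |Γ|. -/

import Mathlib

set_option maxRecDepth 8000


/-- The bimultiplicative form `B_q` associated with `q : Γ → ℂˣ`. -/
def assocForm {Γ : Type*} [AddCommGroup Γ] (Q : Γ → ℂˣ) (a b : Γ) : ℂˣ :=
  Q (a + b) * (Q a)⁻¹ * (Q b)⁻¹

/-- A map `B : Γ × Γ → ℂˣ` is bimultiplicative. -/
def IsBimult {Γ : Type*} [AddCommGroup Γ] (B : Γ → Γ → ℂˣ) : Prop :=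
  (∀ a b c : Γ, B (a + b) c = B a c * B b c) ∧
  (∀ a b c : Γ, B a (b + c) = B a b * B a c)

/-- `Q : Γ → ℂˣ` is a quadratic form. -/
def IsQuadraticForm {Γ : Type*} [AddCommGroup Γ] (Q : Γ → ℂˣ) : Prop :=
  (∀ (n : ℤ) (a : Γ), Q (n • a) = Q a ^ (n ^ 2)) ∧ IsBimult (assocForm Q)

/-- For a nondegenerate quadratic form `q` on a finite abelian group `Γ`,
`|Σ_{a∈Γ} q(a)|² = |Γ|`. -/
theorem gauss_sum_abs_sq_eq_card
    (Γ : Type*) [AddCommGroup Γ] [Fintype Γ]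
    (q : Γ → ℂˣ) (hq : IsQuadraticForm q)
    (hnd : ∀ a : Γ, (∀ b : Γ, assocForm q a b = 1) → a = 0) :
    ‖∑ a : Γ, (q a : ℂ)‖ ^ 2 = Fintype.card Γ := by
  classical
  obtain ⟨hpow, hB1, hB2⟩ := hq
  have h0 : q 0 = 1 := by simpa using hpow 0 0
  have hroot : ∀ a : Γ, (q a : ℂ) ^ ((Fintype.card Γ)^2) = 1 := by
    intro a
    have h1 : ((Fintype.card Γ : ℤ)) • a = 0 := by
      have := card_nsmul_eq_zero (x := a)
      simpa using this
    have := hpow (Fintype.card Γ) a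
    rw [h1, h0] at this
    have : (q a) ^ ((Fintype.card Γ : ℤ)^2) = 1 := this.symm
    have := congrArg (Units.val) this
    push_cast at this ⊢
    rw [← Nat.cast_pow, zpow_natCast] at this; exact this
  have habs : ∀ a : Γ, ‖(q a : ℂ)‖ = 1 := by
    intro a
    have h := congrArg (‖·‖) (hroot a)
    rw [norm_pow, norm_one] at h
    have hnn : 0 ≤ ‖(q a : ℂ)‖ := norm_nonneg _
    by_contra hne
    rcases lt_or_gt_of_ne hne with hlt | hgt
    · have := pow_lt_one₀ hnn hlt (by positivity : (Fintype.card Γ)^2 ≠ 0)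
      rw [h] at this; exact lt_irrefl _ this
    · have := one_lt_pow₀ hgt (by positivity : (Fintype.card Γ)^2 ≠ 0)
      rw [h] at this; exact lt_irrefl _ this
  have hconj : ∀ a : Γ, (starRingEnd ℂ) (q a : ℂ) = ((q a : ℂ))⁻¹ :=
    fun a => (Complex.inv_eq_conj (habs a)).symm
  have hortho : ∀ c : Γ, (∑ b : Γ, (assocForm q c b : ℂ)) =
      if c = 0 then (Fintype.card Γ : ℂ) else 0 := by
    intro c
    by_cases hc : c = 0
    · subst hc
      have h1 : ∀ b : Γ, assocForm q 0 b = 1 := by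
        intro b; simp [assocForm, h0]
      rw [if_pos rfl]
      calc ∑ b : Γ, (assocForm q 0 b : ℂ) = ∑ _b : Γ, (1:ℂ) :=
            Finset.sum_congr rfl fun b _ => by rw [h1 b]; rfl
        _ = Fintype.card Γ := by
            rw [Finset.sum_const, Finset.card_univ, nsmul_eq_mul, mul_one]
    · simp only [if_neg hc]
      obtain ⟨b0, hb0⟩ : ∃ b0, assocForm q c b0 ≠ 1 := by
        by_contra h; push_neg at h; exact hc (hnd c h)
      have key : (assocForm q c b0 : ℂ) * ∑ b : Γ, (assocForm q c b : ℂ) =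
          ∑ b : Γ, (assocForm q c b : ℂ) := by
        rw [Finset.mul_sum]
        exact Fintype.sum_equiv (Equiv.addLeft b0) _ _ (fun b => by
          rw [← Units.val_mul, ← hB2 c b0 b]; rfl)
      have hb0' : (assocForm q c b0 : ℂ) ≠ 1 := by
        exact fun h => hb0 (Units.ext h)
      have hz : ((assocForm q c b0 : ℂ) - 1) * ∑ b : Γ, (assocForm q c b : ℂ) = 0 := by
        linear_combination key
      rcases mul_eq_zero.1 hz with h | h
      · exact absurd (by linear_combination h) hb0'
      · exact h
  set S := ∑ a : Γ, (q a : ℂ) with hS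
  have hmain : S * (starRingEnd ℂ) S = (Fintype.card Γ : ℂ) := by
    rw [hS, map_sum]
    simp_rw [hconj]
    rw [Finset.sum_mul_sum, Finset.sum_comm]
    have step : ∀ b : Γ, (∑ a : Γ, (q a : ℂ) * ((q b : ℂ))⁻¹) =
        ∑ c : Γ, (assocForm q c b : ℂ) * (q c : ℂ) := by
      intro b
      refine (Fintype.sum_equiv (Equiv.addLeft b)
        (fun c => (assocForm q c b : ℂ) * (q c : ℂ))
        (fun a => (q a : ℂ) * ((q b : ℂ))⁻¹) (fun c => ?_)).symm
      have hqb : (q b : ℂ) ≠ 0 := Units.ne_zero _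
      have hqc : (q c : ℂ) ≠ 0 := Units.ne_zero _
      show (assocForm q c b : ℂ) * (q c : ℂ) = (q (b + c) : ℂ) * ((q b : ℂ))⁻¹
      have : (assocForm q c b : ℂ) = (q (c + b) : ℂ) * ((q c : ℂ))⁻¹ * ((q b : ℂ))⁻¹ := by
        simp [assocForm]
      rw [this, add_comm c b]
      field_simp
    simp_rw [step]
    rw [Finset.sum_comm]
    have : ∀ c : Γ, (∑ b : Γ, (assocForm q c b : ℂ) * (q c : ℂ)) =
        (if c = 0 then (Fintype.card Γ : ℂ) else 0) * (q c : ℂ) := by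
      intro c; rw [← Finset.sum_mul, hortho c]
    simp_rw [this]
    rw [Finset.sum_eq_single (0:Γ) (fun c _ hc => by simp [hc])
      (fun h => absurd (Finset.mem_univ _) h)]
    simp [h0]
  have hcast : ‖S‖ ^ 2 = ‖((Fintype.card Γ : ℂ))‖ := by
    rw [← hmain, norm_mul, Complex.norm_conj, sq]
  rw [hcast, Complex.norm_natCast]
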